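/- Let m ≥ 1, let f : [0,1] → [0,1] and π : [0,1] → ℝ^m be C^{m+1}, and let p ∈ [0,1] with P = π(p) satisfy: π^{-1}(P) = {p}, and the vectors π^{(1)}(p), …, π^{(m)}(p) are linearly independent in ℝ^m. Let P_0, P_1, … be a trajectory of F = π ∘ f ∘ π^{-1} that is dense in the curve at P, i.e. there is a neighborhood U of P in ℝ^m such that {P_i : i ≥ 0} is dense in π([0,1]) ∩ U. Let {ε_k} be a decreasing sequence of positive numbers with ε_k → 0, and let {M_k} be a sequence of m × m matrices with W(M_k, P, ε_k) ≤ W(M(P), P, ε_k) for all k, where M(P) is the Eckmann–Ruelle linearization at P. Then M_k → M(P) in matrix norm as k → ∞; indeed there is a constant C such that ‖M_k − M(P)‖ ≤ C ε_k for all sufficiently large k. -/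

import Mathlib

open Set Filter Topology

/-- The worst-case linearization error of the map `L` over the `ε`-ball about `P`:
`W(L, P, ε) = sup { ‖P_{i+1} − F(P) − L(P_i − P)‖ : ‖P_i − P‖ ≤ ε }`, where `Pt i = P_i`
is the trajectory and `FP = F(P)`. -/
noncomputable def linW {E : Type*} [NormedAddCommGroup E]
    (Pt : ℕ → E) (FP : E) (L : E → E) (P : E) (ε : ℝ) : ℝ :=
  sSup {r : ℝ | ∃ i, ‖Pt i - P‖ ≤ ε ∧ r = ‖Pt (i + 1) - FP - L (Pt i - P)‖}

open scoped Nat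


/-- Two-sided Taylor remainder bound at an arbitrary point of `Icc a b`. -/
theorem twoSided_taylor {E : Type*} [NormedAddCommGroup E] [NormedSpace ℝ E]
    {g : ℝ → E} {n : ℕ} {a b : ℝ} (hab : a < b)
    (hg : ContDiffOn ℝ (n + 1) g (Icc a b)) {p : ℝ} (hp : p ∈ Icc a b) :
    ∃ C, ∀ x ∈ Icc a b, ‖g x - taylorWithinEval g n (Icc a b) p x‖ ≤ C * |x - p| ^ (n + 1) := by
  have hu : UniqueDiffOn ℝ (Icc a b) := uniqueDiffOn_Icc hab
  have hcont : ContinuousOn (iteratedDerivWithin (n + 1) g (Icc a b)) (Icc a b) :=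
    hg.continuousOn_iteratedDerivWithin le_rfl hu
  obtain ⟨C0, hC0⟩ := (isCompact_Icc).exists_bound_of_continuousOn hcont
  have hC0' : ∀ y ∈ Icc a b, ‖iteratedDerivWithin (n + 1) g (Icc a b) y‖ ≤ max C0 0 :=
    fun y hy => (hC0 y hy).trans (le_max_left _ _)
  have hg' : DifferentiableOn ℝ (iteratedDerivWithin n g (Icc a b)) (Icc a b) :=
    hg.differentiableOn_iteratedDerivWithin (by exact_mod_cast n.lt_succ_self) hu
  refine ⟨(max C0 0) / (Nat.factorial n : ℝ), fun x hx => ?_⟩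
  rcases le_total p x with hpx | hxp
  · -- interval [p, x]
    have hsub : Icc p x ⊆ Icc a b := Icc_subset_Icc hp.1 hx.2
    have A : ∀ t ∈ Icc p x, HasDerivWithinAt (fun y => taylorWithinEval g n (Icc a b) y x)
        (((n ! : ℝ)⁻¹ * (x - t) ^ n) • iteratedDerivWithin (n + 1) g (Icc a b) t) (Icc p x) t :=
      fun t ht => (hasDerivWithinAt_taylorWithinEval_at_Icc x hab (hsub ht) hg.of_succ hg').mono hsub
    have h' : ∀ t ∈ Ico p x,
        ‖((n ! : ℝ)⁻¹ * (x - t) ^ n) • iteratedDerivWithin (n + 1) g (Icc a b) t‖ ≤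
          (n ! : ℝ)⁻¹ * |x - p| ^ n * max C0 0 := by
      intro t ht
      rw [norm_smul, Real.norm_eq_abs]
      have h1 : |(n ! : ℝ)⁻¹ * (x - t) ^ n| ≤ (n ! : ℝ)⁻¹ * |x - p| ^ n := by
        rw [abs_mul, abs_pow, abs_inv, Nat.abs_cast]
        have habs : |x - t| ≤ |x - p| := by
          rw [abs_of_nonneg (sub_nonneg.2 ht.2.le), abs_of_nonneg (sub_nonneg.2 hpx)]
          linarith [ht.1]
        exact mul_le_mul_of_nonneg_left (pow_le_pow_left₀ (abs_nonneg _) habs n) (by positivity)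
      exact mul_le_mul h1 (hC0' t (hsub ⟨ht.1, ht.2.le⟩)) (norm_nonneg _) (by positivity)
    have key := norm_image_sub_le_of_norm_deriv_le_segment' A h' x (right_mem_Icc.2 hpx)
    simp only [taylorWithinEval_self] at key
    calc ‖g x - taylorWithinEval g n (Icc a b) p x‖
        ≤ (n ! : ℝ)⁻¹ * |x - p| ^ n * max C0 0 * (x - p) := key
      _ = max C0 0 / (Nat.factorial n : ℝ) * |x - p| ^ (n + 1) := by
          rw [abs_of_nonneg (sub_nonneg.2 hpx)]; ring
  · -- interval [x, p]
    have hsub : Icc x p ⊆ Icc a b := Icc_subset_Icc hx.1 hp.2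
    have A : ∀ t ∈ Icc x p, HasDerivWithinAt (fun y => taylorWithinEval g n (Icc a b) y x)
        (((n ! : ℝ)⁻¹ * (x - t) ^ n) • iteratedDerivWithin (n + 1) g (Icc a b) t) (Icc x p) t :=
      fun t ht => (hasDerivWithinAt_taylorWithinEval_at_Icc x hab (hsub ht) hg.of_succ hg').mono hsub
    have h' : ∀ t ∈ Ico x p,
        ‖((n ! : ℝ)⁻¹ * (x - t) ^ n) • iteratedDerivWithin (n + 1) g (Icc a b) t‖ ≤
          (n ! : ℝ)⁻¹ * |x - p| ^ n * max C0 0 := by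
      intro t ht
      rw [norm_smul, Real.norm_eq_abs]
      have h1 : |(n ! : ℝ)⁻¹ * (x - t) ^ n| ≤ (n ! : ℝ)⁻¹ * |x - p| ^ n := by
        rw [abs_mul, abs_pow, abs_inv, Nat.abs_cast]
        have habs : |x - t| ≤ |x - p| := by
          rw [abs_sub_comm, abs_of_nonneg (sub_nonneg.2 ht.1), abs_sub_comm x p,
            abs_of_nonneg (sub_nonneg.2 hxp)]
          linarith [ht.2]
        exact mul_le_mul_of_nonneg_left (pow_le_pow_left₀ (abs_nonneg _) habs n) (by positivity)
      exact mul_le_mul h1 (hC0' t (hsub ⟨ht.1, ht.2.le⟩)) (norm_nonneg _) (by positivity)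
    have key := norm_image_sub_le_of_norm_deriv_le_segment' A h' p (right_mem_Icc.2 hxp)
    simp only [taylorWithinEval_self] at key
    rw [norm_sub_rev]
    calc ‖taylorWithinEval g n (Icc a b) p x - g x‖
        ≤ (n ! : ℝ)⁻¹ * |x - p| ^ n * max C0 0 * (p - x) := key
      _ = max C0 0 / (Nat.factorial n : ℝ) * |x - p| ^ (n + 1) := by
          rw [abs_sub_comm, abs_of_nonneg (sub_nonneg.2 hxp)]; ring

/-- Operator norm controlled by values on a basis. -/
theorem opnorm_le_of_basis {E : Type*} [NormedAddCommGroup E] [NormedSpace ℝ E]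
    [FiniteDimensional ℝ E] {ι : Type*} [Fintype ι] (b : Module.Basis ι ℝ E) :
    ∃ K : ℝ, 0 ≤ K ∧ ∀ (T : E →L[ℝ] E) (β : ℝ), 0 ≤ β → (∀ i, ‖T (b i)‖ ≤ β) → ‖T‖ ≤ K * β := by
  set K : ℝ := ∑ i : ι, ‖LinearMap.toContinuousLinearMap (b.coord i)‖ with hK
  refine ⟨K, Finset.sum_nonneg fun i _ => norm_nonneg _, fun T β hβ hTb => ?_⟩
  refine T.opNorm_le_bound (by positivity) fun u => ?_
  have hu : T u = ∑ i : ι, b.repr u i • T (b i) := by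
    conv_lhs => rw [← b.sum_repr u]
    rw [map_sum]
    simp [map_smul]
  rw [hu]
  calc ‖∑ i : ι, b.repr u i • T (b i)‖ ≤ ∑ i : ι, ‖b.repr u i • T (b i)‖ :=
        norm_sum_le _ _
    _ ≤ ∑ i : ι, ‖LinearMap.toContinuousLinearMap (b.coord i)‖ * ‖u‖ * β := by
        refine Finset.sum_le_sum fun i _ => ?_
        rw [norm_smul, Real.norm_eq_abs]
        have h1 : |b.repr u i| ≤ ‖LinearMap.toContinuousLinearMap (b.coord i)‖ * ‖u‖ := by
          have := (LinearMap.toContinuousLinearMap (b.coord i)).le_opNorm u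
          simpa [Module.Basis.coord_apply] using this
        exact mul_le_mul h1 (hTb i) (norm_nonneg _) (by positivity)
    _ = K * β * ‖u‖ := by rw [← Finset.sum_mul, ← Finset.sum_mul]; ring

/-- Inversion coefficients for the scaled Vandermonde system with nodes `(j+1)/m`. -/
theorem exists_vandermonde_coeffs (m : ℕ) (hm : 1 ≤ m) :
    ∃ A : Matrix (Fin m) (Fin m) ℝ,
      ∀ (E : Type) [NormedAddCommGroup E] [NormedSpace ℝ E] (w : Fin m → E) (n : Fin m),
        ∑ j : Fin m, A n j •
          (∑ n' : Fin m, ((((j : ℕ) + 1 : ℝ) / m) ^ ((n' : ℕ) + 1) / (((n' : ℕ) + 1)! : ℝ)) • w n')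
          = w n := by
  set s : Fin m → ℝ := fun j => ((j : ℕ) + 1 : ℝ) / m with hs
  have hmpos : (0 : ℝ) < m := by exact_mod_cast hm
  have hspos : ∀ j, 0 < s j := fun j => by
    have : (0:ℝ) < (j : ℕ) + 1 := by positivity
    exact div_pos this hmpos
  have hsmono : StrictMono s := by
    intro i j hij
    apply div_lt_div_of_pos_right ?_ hmpos
    have : (i : ℕ) < (j : ℕ) := hij
    exact_mod_cast Nat.succ_lt_succ this
  set B : Matrix (Fin m) (Fin m) ℝ :=
    Matrix.of (fun j n : Fin m => s j ^ ((n : ℕ) + 1) / (((n : ℕ) + 1)! : ℝ)) with hB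
  have hBeq : B = Matrix.diagonal s * Matrix.vandermonde s *
      Matrix.diagonal (fun n : Fin m => ((((n : ℕ) + 1)! : ℝ))⁻¹) := by
    ext j n
    simp [hB, Matrix.mul_apply, Matrix.diagonal, Matrix.vandermonde, Finset.sum_ite_eq,
      Finset.sum_ite_eq', div_eq_mul_inv, pow_succ, mul_comm, mul_assoc, mul_left_comm]
  have hdet : IsUnit B.det := by
    rw [hBeq, Matrix.det_mul, Matrix.det_mul, Matrix.det_diagonal, Matrix.det_diagonal,
      Matrix.det_vandermonde]
    refine (IsUnit.mul (IsUnit.mul ?_ ?_) ?_)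
    · exact (Finset.prod_pos fun j _ => hspos j).ne'.isUnit
    · refine (Finset.prod_ne_zero_iff.2 fun i _ => Finset.prod_ne_zero_iff.2 fun j hj => ?_).isUnit
      have : i < j := Finset.mem_Ioi.1 hj
      exact sub_ne_zero.2 (hsmono this).ne'
    · refine (Finset.prod_ne_zero_iff.2 fun n _ => ?_).isUnit
      positivity
  refine ⟨B⁻¹, fun E _ _ w n => ?_⟩
  have hAB : B⁻¹ * B = 1 := Matrix.nonsing_inv_mul B hdet
  calc ∑ j : Fin m, B⁻¹ n j • (∑ n' : Fin m, (s j ^ ((n' : ℕ) + 1) / (((n' : ℕ) + 1)! : ℝ)) • w n')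
      = ∑ j : Fin m, ∑ n' : Fin m, (B⁻¹ n j * B j n') • w n' := by
        refine Finset.sum_congr rfl fun j _ => ?_
        rw [Finset.smul_sum]
        refine Finset.sum_congr rfl fun n' _ => ?_
        rw [smul_smul]
        rfl
    _ = ∑ n' : Fin m, (∑ j : Fin m, B⁻¹ n j * B j n') • w n' := by
        rw [Finset.sum_comm]
        simp [Finset.sum_smul]
    _ = ∑ n' : Fin m, ((1 : Matrix (Fin m) (Fin m) ℝ) n n') • w n' := by
        refine Finset.sum_congr rfl fun n' _ => ?_
        rw [← hAB, Matrix.mul_apply]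
    _ = w n := by
        simp [Matrix.one_apply]


set_option maxHeartbeats 1000000 in
/-- **Theorem JJ10** (Convergence Theorem, ℝ¹ → ℝᵐ).
If the reconstructed trajectory is dense in the curve at `P` and `M_k` is a sequence of
matrices which do at least as well as the Eckmann–Ruelle linearization `M(P)` over
`ε_k`-balls, `ε_k ↓ 0`, then `M_k → M(P)`; in fact `‖M_k − M(P)‖ ≤ C ε_k` eventually. -/
theorem statement12 (m : ℕ) (hm : 1 ≤ m)
    (f : ℝ → ℝ) (ψ : ℝ → EuclideanSpace ℝ (Fin m))
    (hfmaps : MapsTo f (Icc (0:ℝ) 1) (Icc (0:ℝ) 1))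
    (hf : ContDiffOn ℝ (m + 1) f (Icc (0:ℝ) 1))
    (hψ : ContDiffOn ℝ (m + 1) ψ (Icc (0:ℝ) 1))
    (p : ℝ) (hp : p ∈ Icc (0:ℝ) 1)
    (P : EuclideanSpace ℝ (Fin m)) (hP : P = ψ p)
    (hinj : ∀ x ∈ Icc (0:ℝ) 1, ψ x = P → x = p)
    (hindep : LinearIndependent ℝ
      (fun n : Fin m => iteratedDerivWithin ((n : ℕ) + 1) ψ (Icc (0:ℝ) 1) p))
    (traj : ℕ → ℝ) (htrajmem : ∀ i, traj i ∈ Icc (0:ℝ) 1)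
    (htraj : ∀ i, traj (i + 1) = f (traj i))
    -- the trajectory is dense in the curve at `P`
    (hdense : ∃ U ∈ 𝓝 P,
      ψ '' Icc (0:ℝ) 1 ∩ U ⊆ closure (Set.range fun i => ψ (traj i)))
    -- the Eckmann–Ruelle linearization at `P`
    (M : EuclideanSpace ℝ (Fin m) →L[ℝ] EuclideanSpace ℝ (Fin m))
    (hM : ∀ n : Fin m,
      M (iteratedDerivWithin ((n : ℕ) + 1) ψ (Icc (0:ℝ) 1) p)
        = iteratedDerivWithin ((n : ℕ) + 1) (ψ ∘ f) (Icc (0:ℝ) 1) p)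
    (ε : ℕ → ℝ) (hεpos : ∀ k, 0 < ε k) (hεanti : StrictAnti ε)
    (hεlim : Tendsto ε atTop (𝓝 0))
    (Mk : ℕ → (EuclideanSpace ℝ (Fin m) →L[ℝ] EuclideanSpace ℝ (Fin m)))
    (hMk : ∀ k, linW (fun i => ψ (traj i)) (ψ (f p)) (⇑(Mk k)) P (ε k)
      ≤ linW (fun i => ψ (traj i)) (ψ (f p)) (⇑M) P (ε k)) :
    Tendsto Mk atTop (𝓝 M) ∧
      ∃ C : ℝ, ∀ᶠ k in atTop, ‖Mk k - M‖ ≤ C * ε k := by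
  classical
  have hab : (0:ℝ) < 1 := one_pos
  obtain ⟨U, hU, hdenseU⟩ := hdense
  set v : ℕ → EuclideanSpace ℝ (Fin m) := fun k => iteratedDerivWithin k ψ (Icc (0:ℝ) 1) p
    with hvdef
  set Phi : ℝ → EuclideanSpace ℝ (Fin m) := ψ ∘ f with hPhidef
  have hPhic : ContDiffOn ℝ (m + 1) Phi (Icc (0:ℝ) 1) := hψ.comp hf hfmaps
  set w : ℕ → EuclideanSpace ℝ (Fin m) := fun k => iteratedDerivWithin k Phi (Icc (0:ℝ) 1) p
    with hwdef
  have hv0 : v 0 = P := by simp [hvdef, hP]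
  have hw0 : w 0 = ψ (f p) := by simp [hwdef, hPhidef]
  -- Taylor bounds of order m for ψ and Phi at p
  obtain ⟨CT0, hCT0⟩ := twoSided_taylor (n := m) hab hψ hp
  obtain ⟨CF0, hCF0⟩ := twoSided_taylor (n := m) hab hPhic hp
  set CT : ℝ := max CT0 0 with hCTdef
  set CF : ℝ := max CF0 0 with hCFdef
  have hCTnn : 0 ≤ CT := le_max_right _ _
  have hCFnn : 0 ≤ CF := le_max_right _ _
  have hTψ : ∀ x ∈ Icc (0:ℝ) 1,
      ‖ψ x - ∑ k ∈ Finset.range (m+1), (((k)! : ℝ)⁻¹ * (x - p)^k) • v k‖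
        ≤ CT * |x - p|^(m+1) := by
    intro x hx
    have h := hCT0 x hx
    rw [taylor_within_apply] at h
    exact h.trans (mul_le_mul_of_nonneg_right (le_max_left _ _) (by positivity))
  have hTPhi : ∀ x ∈ Icc (0:ℝ) 1,
      ‖Phi x - ∑ k ∈ Finset.range (m+1), (((k)! : ℝ)⁻¹ * (x - p)^k) • w k‖
        ≤ CF * |x - p|^(m+1) := by
    intro x hx
    have h := hCF0 x hx
    rw [taylor_within_apply] at h
    exact h.trans (mul_le_mul_of_nonneg_right (le_max_left _ _) (by positivity))
  -- order 1 Taylor bound for ψ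
  have hψ2 : ContDiffOn ℝ ((1:ℕ) + 1) ψ (Icc (0:ℝ) 1) := by
    refine hψ.of_le ?_
    exact_mod_cast Nat.add_le_add_right hm 1
  obtain ⟨C10, hC10⟩ := twoSided_taylor (n := 1) hab hψ2 hp
  set C1 : ℝ := max C10 1 with hC1def
  have hC1pos : (0:ℝ) < C1 := lt_of_lt_of_le one_pos (le_max_right _ _)
  have hT1 : ∀ x ∈ Icc (0:ℝ) 1, ‖ψ x - P - (x - p) • v 1‖ ≤ C1 * |x - p|^2 := by
    intro x hx
    have h := hC10 x hx
    rw [taylor_within_apply] at h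
    have hsum : ∑ k ∈ Finset.range (1+1), (((k)! : ℝ)⁻¹ * (x - p)^k) • v k
        = P + (x - p) • v 1 := by
      rw [Finset.sum_range_succ, Finset.sum_range_one]
      simp [hv0]
    rw [hsum] at h
    have : ψ x - P - (x - p) • v 1 = ψ x - (P + (x - p) • v 1) := by abel
    rw [this]
    exact h.trans (mul_le_mul_of_nonneg_right (le_max_left _ _) (by positivity))
  -- Lipschitz bound for ψ
  have hψ1 : ContDiffOn ℝ ((0:ℕ) + 1) ψ (Icc (0:ℝ) 1) := by
    refine hψ.of_le ?_
    exact_mod_cast Nat.add_le_add_right (Nat.zero_le m) 1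
  obtain ⟨L0, hL0⟩ := twoSided_taylor (n := 0) hab hψ1 hp
  set L : ℝ := max L0 1 with hLdef
  have hLpos : (0:ℝ) < L := lt_of_lt_of_le one_pos (le_max_right _ _)
  have hL : ∀ x ∈ Icc (0:ℝ) 1, ‖ψ x - P‖ ≤ L * |x - p| := by
    intro x hx
    have h := hL0 x hx
    rw [taylor_within_zero_eval, ← hP, pow_one] at h
    exact h.trans (mul_le_mul_of_nonneg_right (le_max_left _ _) (abs_nonneg _))
  -- nondegeneracy
  have hv1 : v 1 ≠ 0 := by
    have h := hindep.ne_zero ⟨0, hm⟩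
    simpa [hvdef] using h
  have hv1pos : (0:ℝ) < ‖v 1‖ := norm_pos_iff.2 hv1
  set c0 : ℝ := ‖v 1‖ / 2 with hc0def
  have hc0pos : 0 < c0 := by positivity
  set δ0 : ℝ := ‖v 1‖ / (2 * C1) with hδ0def
  have hδ0pos : 0 < δ0 := by positivity
  have hlow : ∀ x ∈ Icc (0:ℝ) 1, |x - p| ≤ δ0 → c0 * |x - p| ≤ ‖ψ x - P‖ := by
    intro x hx hxd
    have h1 := hT1 x hx
    have h2 : ‖(x - p) • v 1‖ ≤ ‖ψ x - P‖ + C1 * |x - p|^2 := by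
      have h3 : ‖(x - p) • v 1‖ ≤ ‖ψ x - P‖ + ‖ψ x - P - (x - p) • v 1‖ := by
        have e : (x - p) • v 1 = (ψ x - P) - (ψ x - P - (x - p) • v 1) := by abel
        calc ‖(x - p) • v 1‖ = ‖(ψ x - P) - (ψ x - P - (x - p) • v 1)‖ := by rw [← e]
          _ ≤ ‖ψ x - P‖ + ‖ψ x - P - (x - p) • v 1‖ :=
              norm_sub_le (ψ x - P) (ψ x - P - (x - p) • v 1)
      linarith
    rw [norm_smul, Real.norm_eq_abs] at h2
    have h4 : C1 * |x - p|^2 ≤ (‖v 1‖ / 2) * |x - p| := by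
      have : C1 * |x - p| ≤ ‖v 1‖ / 2 := by
        calc C1 * |x - p| ≤ C1 * δ0 := by
              exact mul_le_mul_of_nonneg_left hxd hC1pos.le
          _ = ‖v 1‖ / 2 := by
              rw [hδ0def]; field_simp

      calc C1 * |x - p|^2 = (C1 * |x - p|) * |x - p| := by ring
        _ ≤ (‖v 1‖ / 2) * |x - p| := mul_le_mul_of_nonneg_right this (abs_nonneg _)
    rw [hc0def]
    nlinarith [abs_nonneg (x - p)]
  -- compactness: small image norm forces closeness to p
  obtain ⟨ε0, hε0pos, hε0⟩ : ∃ ε0 : ℝ, 0 < ε0 ∧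
      ∀ x ∈ Icc (0:ℝ) 1, ‖ψ x - P‖ < ε0 → |x - p| < δ0 := by
    by_cases hK : (Icc (0:ℝ) 1 ∩ {x | δ0 ≤ |x - p|}).Nonempty
    · have hKcl : IsClosed ({x : ℝ | δ0 ≤ |x - p|}) :=
        isClosed_le continuous_const (continuous_id.sub continuous_const).abs
      have hKc : IsCompact (Icc (0:ℝ) 1 ∩ {x | δ0 ≤ |x - p|}) :=
        isCompact_Icc.inter_right hKcl
      have hcont : ContinuousOn (fun x => ‖ψ x - P‖) (Icc (0:ℝ) 1 ∩ {x | δ0 ≤ |x - p|}) :=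
        ((hψ.continuousOn.mono inter_subset_left).sub continuousOn_const).norm
      obtain ⟨x₀, hx₀, hmin⟩ := hKc.exists_isMinOn hK hcont
      refine ⟨‖ψ x₀ - P‖, ?_, ?_⟩
      · rw [norm_pos_iff, sub_ne_zero]
        intro hcon
        have : x₀ = p := hinj x₀ hx₀.1 hcon
        rw [this] at hx₀
        have := hx₀.2
        simp only [mem_setOf_eq, sub_self, abs_zero] at this
        linarith
      · intro x hx hlt
        by_contra hge
        push_neg at hge
        exact absurd (hmin ⟨hx, hge⟩) (not_le.2 hlt)
    · refine ⟨1, one_pos, fun x hx _ => ?_⟩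
      by_contra hge
      push_neg at hge
      exact hK ⟨x, hx, hge⟩
  -- global bound for ψ
  obtain ⟨Bψ, hBψ⟩ := isCompact_Icc.exists_bound_of_continuousOn hψ.continuousOn
  -- key estimate: quality of the Eckmann-Ruelle linearization along the curve
  set C2 : ℝ := CF + ‖M‖ * CT with hC2def
  have hC2nn : 0 ≤ C2 := add_nonneg hCFnn (mul_nonneg (norm_nonneg _) hCTnn)
  have hkey : ∀ x ∈ Icc (0:ℝ) 1,
      ‖Phi x - ψ (f p) - M (ψ x - P)‖ ≤ C2 * |x - p|^(m+1) := by
    intro x hx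
    set c : ℕ → ℝ := fun k => ((k)! : ℝ)⁻¹ * (x - p)^k with hcdef
    have hc0 : c 0 = 1 := by simp [hcdef]
    set Tψs : EuclideanSpace ℝ (Fin m) := ∑ k ∈ Finset.range (m+1), c k • v k with hTψsdef
    set TPs : EuclideanSpace ℝ (Fin m) := ∑ k ∈ Finset.range (m+1), c k • w k with hTPsdef
    have hzero : TPs - ψ (f p) = M (Tψs - P) := by
      have e1 : Tψs - P = ∑ k ∈ Finset.range m, c (k+1) • v (k+1) := by
        rw [hTψsdef, Finset.sum_range_succ']
        simp [hc0, hv0]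
      have e2 : TPs - ψ (f p) = ∑ k ∈ Finset.range m, c (k+1) • w (k+1) := by
        rw [hTPsdef, Finset.sum_range_succ']
        simp [hc0, hw0]
      rw [e1, e2, map_sum]
      refine Finset.sum_congr rfl fun k hk => ?_
      rw [map_smul]
      congr 1
      exact (hM ⟨k, Finset.mem_range.1 hk⟩).symm
    have hdecomp : Phi x - ψ (f p) - M (ψ x - P) =
        (Phi x - TPs) + M (Tψs - ψ x) + (TPs - ψ (f p) - M (Tψs - P)) := by
      rw [map_sub, map_sub, map_sub]
      abel
    rw [hdecomp, hzero, sub_self, add_zero]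
    calc ‖(Phi x - TPs) + M (Tψs - ψ x)‖
        ≤ ‖Phi x - TPs‖ + ‖M (Tψs - ψ x)‖ := norm_add_le _ _
      _ ≤ CF * |x - p|^(m+1) + ‖M‖ * (CT * |x - p|^(m+1)) := by
          refine add_le_add (hTPhi x hx) ?_
          refine (M.le_opNorm _).trans ?_
          refine mul_le_mul_of_nonneg_left ?_ (norm_nonneg M)
          rw [norm_sub_rev]
          exact hTψ x hx
      _ = C2 * |x - p|^(m+1) := by rw [hC2def]; ring
  -- elementwise bound for the linearization error of M
  set C3 : ℝ := C2 / c0^(m+1) with hC3def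
  have hC3nn : 0 ≤ C3 := div_nonneg hC2nn (by positivity)
  have hMel : ∀ e : ℝ, 0 < e → e ≤ ε0 / 2 → ∀ q ∈ Icc (0:ℝ) 1, ‖ψ q - P‖ ≤ e →
      ‖Phi q - ψ (f p) - M (ψ q - P)‖ ≤ C3 * e^(m+1) := by
    intro e he0 heε q hq hqe
    have hqδ : |q - p| < δ0 := hε0 q hq (lt_of_le_of_lt hqe (by linarith))
    have hqc : c0 * |q - p| ≤ ‖ψ q - P‖ := hlow q hq hqδ.le
    have hqp : |q - p| ≤ e / c0 := by
      rw [le_div_iff₀ hc0pos]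
      calc |q - p| * c0 = c0 * |q - p| := by ring
        _ ≤ ‖ψ q - P‖ := hqc
        _ ≤ e := hqe
    calc ‖Phi q - ψ (f p) - M (ψ q - P)‖ ≤ C2 * |q - p|^(m+1) := hkey q hq
      _ ≤ C2 * (e / c0)^(m+1) :=
          mul_le_mul_of_nonneg_left (pow_le_pow_left₀ (abs_nonneg _) hqp _) hC2nn
      _ = C3 * e^(m+1) := by rw [hC3def, div_pow]; ring
  -- radius inside U
  obtain ⟨r, hrpos, hrball⟩ := Metric.mem_nhds_iff.1 hU
  -- basis from the independent derivative vectors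
  haveI : Nonempty (Fin m) := ⟨⟨0, hm⟩⟩
  have hcard : Fintype.card (Fin m) = Module.finrank ℝ (EuclideanSpace ℝ (Fin m)) := by
    simp
  set bas : Module.Basis (Fin m) ℝ (EuclideanSpace ℝ (Fin m)) :=
    basisOfLinearIndependentOfCardEqFinrank hindep hcard with hbasdef
  have hbas : ∀ n : Fin m, bas n = v ((n : ℕ) + 1) := by
    intro n
    rw [hbasdef, coe_basisOfLinearIndependentOfCardEqFinrank]
  obtain ⟨K, hKnn, hKle⟩ := opnorm_le_of_basis bas
  obtain ⟨A, hA⟩ := exists_vandermonde_coeffs m hm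
  set KA : ℝ := (∑ n : Fin m, ∑ j : Fin m, |A n j|) + 1 with hKAdef
  have hKA1 : 1 ≤ KA := by
    rw [hKAdef]
    have : (0:ℝ) ≤ ∑ n : Fin m, ∑ j : Fin m, |A n j| :=
      Finset.sum_nonneg fun n _ => Finset.sum_nonneg fun j _ => abs_nonneg _
    linarith
  have hKArow : ∀ n : Fin m, ∑ j : Fin m, |A n j| ≤ KA := by
    intro n
    rw [hKAdef]
    have h1 : ∑ j : Fin m, |A n j| ≤ ∑ n : Fin m, ∑ j : Fin m, |A n j| :=
      Finset.single_le_sum (f := fun n => ∑ j : Fin m, |A n j|)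
        (fun n _ => Finset.sum_nonneg fun j _ => abs_nonneg _) (Finset.mem_univ n)
    linarith
  set ρ : ℝ := min (1/(2*L)) (1/2) with hρdef
  have hρpos : 0 < ρ := lt_min (by positivity) (by norm_num)
  have hρ2L : ρ ≤ 1/(2*L) := min_le_left _ _
  have hρhalf : ρ ≤ 1/2 := min_le_right _ _
  have hρ1 : ρ ≤ 1 := hρhalf.trans (by norm_num)
  set iρ : ℝ := ρ⁻¹ with hiρdef
  have hρiρ : ρ * iρ = 1 := mul_inv_cancel₀ hρpos.ne'
  have hiρpos : 0 < iρ := inv_pos.2 hρpos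
  have hiρ1 : 1 ≤ iρ := by
    nlinarith [mul_nonneg (sub_nonneg.2 hρ1) hiρpos.le]
  set C5 : ℝ := KA * (2*C3*iρ^(m+1)) + KA * CT with hC5def
  have hKAnn : (0:ℝ) ≤ KA := le_trans zero_le_one hKA1
  have hC5nn : 0 ≤ C5 := by
    have h1 : (0:ℝ) ≤ iρ^(m+1) := by positivity
    refine add_nonneg (mul_nonneg hKAnn ?_) (mul_nonneg hKAnn hCTnn)
    refine mul_nonneg (mul_nonneg (by norm_num) hC3nn) h1
  set C6 : ℝ := K * C5 with hC6def
  have hC6nn : 0 ≤ C6 := mul_nonneg hKnn hC5nn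
  -- the main quantitative estimate for a single large k
  have hmain : ∀ k, ε k ≤ ε0/2 → ε k ≤ 1 → ε k < r → C6 * ε k ≤ 1/2 →
      ‖Mk k - M‖ ≤ (2*C6) * ε k := by
    intro k hk1 hk2 hk3 hk4
    set e : ℝ := ε k with hedef
    have he0 : 0 < e := hεpos k
    set N : EuclideanSpace ℝ (Fin m) →L[ℝ] EuclideanSpace ℝ (Fin m) := Mk k - M with hNdef
    -- W bound for M
    have hWM : linW (fun i => ψ (traj i)) (ψ (f p)) (⇑M) P e ≤ C3 * e^(m+1) := by
      rw [linW]
      refine Real.sSup_le ?_ (by positivity)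
      rintro rr ⟨i, hi, rfl⟩
      have h1 : ψ (traj (i+1)) = Phi (traj i) := by rw [htraj i]; rfl
      rw [h1]
      exact hMel e he0 hk1 (traj i) (htrajmem i) hi
    have hWk : linW (fun i => ψ (traj i)) (ψ (f p)) (⇑(Mk k)) P e ≤ C3 * e^(m+1) :=
      (hMk k).trans hWM
    have hbdd : BddAbove {rr : ℝ | ∃ i, ‖ψ (traj i) - P‖ ≤ e ∧
        rr = ‖ψ (traj (i+1)) - ψ (f p) - (Mk k) (ψ (traj i) - P)‖} := by
      refine ⟨Bψ + ‖ψ (f p)‖ + ‖Mk k‖ * e, ?_⟩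
      rintro rr ⟨i, hi, rfl⟩
      calc ‖ψ (traj (i+1)) - ψ (f p) - (Mk k) (ψ (traj i) - P)‖
          ≤ ‖ψ (traj (i+1)) - ψ (f p)‖ + ‖(Mk k) (ψ (traj i) - P)‖ := norm_sub_le _ _
        _ ≤ (‖ψ (traj (i+1))‖ + ‖ψ (f p)‖) + ‖Mk k‖ * e := by
            refine add_le_add (norm_sub_le _ _) ?_
            exact ((Mk k).le_opNorm _).trans (mul_le_mul_of_nonneg_left hi (norm_nonneg _))
        _ ≤ Bψ + ‖ψ (f p)‖ + ‖Mk k‖ * e := by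
            have := hBψ (traj (i+1)) (htrajmem (i+1)); linarith
    have helem : ∀ i, ‖ψ (traj i) - P‖ ≤ e →
        ‖ψ (traj (i+1)) - ψ (f p) - (Mk k) (ψ (traj i) - P)‖ ≤ C3 * e^(m+1) := by
      intro i hi
      have hmem : ‖ψ (traj (i+1)) - ψ (f p) - (Mk k) (ψ (traj i) - P)‖ ∈
          {rr : ℝ | ∃ i, ‖ψ (traj i) - P‖ ≤ e ∧
            rr = ‖ψ (traj (i+1)) - ψ (f p) - (Mk k) (ψ (traj i) - P)‖} := ⟨i, hi, rfl⟩
      have h2 : sSup {rr : ℝ | ∃ i, ‖ψ (traj i) - P‖ ≤ e ∧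
          rr = ‖ψ (traj (i+1)) - ψ (f p) - (Mk k) (ψ (traj i) - P)‖} ≤ C3 * e^(m+1) := hWk
      exact (le_csSup hbdd hmem).trans h2
    -- pointwise bound on the curve via density
    have hpt : ∀ x ∈ Icc (0:ℝ) 1, |x - p| ≤ e/(2*L) → ‖N (ψ x - P)‖ ≤ 2*(C3 * e^(m+1)) := by
      intro x hx hxe
      have hx1 : ‖ψ x - P‖ ≤ e/2 := by
        calc ‖ψ x - P‖ ≤ L * |x - p| := hL x hx
          _ ≤ L * (e/(2*L)) := mul_le_mul_of_nonneg_left hxe hLpos.le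
          _ = e/2 := by field_simp
      have hball : ψ x ∈ U := by
        refine hrball ?_
        rw [Metric.mem_ball, dist_eq_norm]
        calc ‖ψ x - P‖ ≤ e/2 := hx1
          _ < r := by linarith
      have hcl : ψ x ∈ closure (range fun i => ψ (traj i)) :=
        hdenseU ⟨mem_image_of_mem ψ hx, hball⟩
      refine le_of_forall_pos_le_add fun η hη => ?_
      set δ : ℝ := min (η / (‖N‖ + 1)) (e/2) with hδdef
      have hδpos : 0 < δ := lt_min (by positivity) (by positivity)
      obtain ⟨y, hy, hyd⟩ := Metric.mem_closure_iff.1 hcl δ hδpos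
      obtain ⟨i, rfl⟩ := hy
      have hdist : ‖ψ x - ψ (traj i)‖ < δ := by rwa [dist_eq_norm] at hyd
      have htb : ‖ψ (traj i) - P‖ ≤ e := by
        have h1 : ‖ψ (traj i) - P‖ ≤ ‖ψ (traj i) - ψ x‖ + ‖ψ x - P‖ := by
          have ee : ψ (traj i) - P = (ψ (traj i) - ψ x) + (ψ x - P) := by abel
          calc ‖ψ (traj i) - P‖ = ‖(ψ (traj i) - ψ x) + (ψ x - P)‖ := by rw [← ee]
            _ ≤ ‖ψ (traj i) - ψ x‖ + ‖ψ x - P‖ := norm_add_le _ _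
        have h2 : ‖ψ (traj i) - ψ x‖ < δ := by rwa [norm_sub_rev]
        have h3 : δ ≤ e/2 := min_le_right _ _
        linarith
      have herrM : ‖ψ (traj (i+1)) - ψ (f p) - M (ψ (traj i) - P)‖ ≤ C3 * e^(m+1) := by
        have h1 : ψ (traj (i+1)) = Phi (traj i) := by rw [htraj i]; rfl
        rw [h1]
        exact hMel e he0 hk1 (traj i) (htrajmem i) htb
      have herrK := helem i htb
      have hNt : ‖N (ψ (traj i) - P)‖ ≤ 2*(C3 * e^(m+1)) := by
        have hid : N (ψ (traj i) - P) =
            (ψ (traj (i+1)) - ψ (f p) - M (ψ (traj i) - P)) -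
              (ψ (traj (i+1)) - ψ (f p) - (Mk k) (ψ (traj i) - P)) := by
          rw [hNdef, ContinuousLinearMap.sub_apply]
          abel
        rw [hid]
        calc ‖(ψ (traj (i+1)) - ψ (f p) - M (ψ (traj i) - P)) -
              (ψ (traj (i+1)) - ψ (f p) - (Mk k) (ψ (traj i) - P))‖
            ≤ ‖ψ (traj (i+1)) - ψ (f p) - M (ψ (traj i) - P)‖ +
              ‖ψ (traj (i+1)) - ψ (f p) - (Mk k) (ψ (traj i) - P)‖ := norm_sub_le _ _
          _ ≤ 2*(C3 * e^(m+1)) := by linarith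
      have hsplit : N (ψ x - P) = N (ψ (traj i) - P) + N (ψ x - ψ (traj i)) := by
        rw [← map_add]
        congr 1
        abel
      have h5 : ‖N (ψ x - ψ (traj i))‖ ≤ ‖N‖ * δ :=
        (N.le_opNorm _).trans (mul_le_mul_of_nonneg_left hdist.le (norm_nonneg _))
      have h6 : ‖N‖ * δ ≤ η := by
        have h1 : δ ≤ η / (‖N‖ + 1) := min_le_left _ _
        have h2 : ‖N‖ * δ ≤ ‖N‖ * (η / (‖N‖ + 1)) :=
          mul_le_mul_of_nonneg_left h1 (norm_nonneg _)
        have h3 : ‖N‖ * (η / (‖N‖ + 1)) ≤ (‖N‖ + 1) * (η / (‖N‖ + 1)) :=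
          mul_le_mul_of_nonneg_right (by linarith [norm_nonneg N]) (by positivity)
        have h4 : (‖N‖ + 1) * (η / (‖N‖ + 1)) = η := by
          field_simp
        linarith
      calc ‖N (ψ x - P)‖ = ‖N (ψ (traj i) - P) + N (ψ x - ψ (traj i))‖ := by rw [hsplit]
        _ ≤ ‖N (ψ (traj i) - P)‖ + ‖N (ψ x - ψ (traj i))‖ := norm_add_le _ _
        _ ≤ 2*(C3 * e^(m+1)) + η := add_le_add hNt (h5.trans h6)
    -- choose offset direction and node points
    have hρe0 : 0 < ρ * e := mul_pos hρpos he0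
    have hρehalf : ρ * e ≤ 1/2 := by
      have ha : ρ * e ≤ (1/2) * e := mul_le_mul_of_nonneg_right hρhalf he0.le
      have hb : (1/2) * e ≤ (1/2) * 1 := mul_le_mul_of_nonneg_left hk2 (by norm_num)
      linarith
    have hρe1 : ρ * e ≤ 1 := by linarith
    have hρee : ρ * e ≤ e := by
      have ha : ρ * e ≤ 1 * e := mul_le_mul_of_nonneg_right hρ1 he0.le
      linarith
    have hmpos : (0:ℝ) < m := by exact_mod_cast hm
    have hsj : ∀ j : Fin m, 0 < (((j:ℕ) + 1 : ℝ)/m) ∧ (((j:ℕ) + 1 : ℝ)/m) ≤ 1 := by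
      intro j
      constructor
      · positivity
      · rw [div_le_one hmpos]
        exact_mod_cast j.2
    obtain ⟨d, hdabs, hmem⟩ : ∃ d : ℝ, |d| = ρ * e ∧
        ∀ j : Fin m, p + (((j:ℕ) + 1 : ℝ)/m) * d ∈ Icc (0:ℝ) 1 := by
      rcases le_or_gt p (1/2) with hphalf | hphalf
      · refine ⟨ρ * e, abs_of_pos hρe0, fun j => ?_⟩
        obtain ⟨hj0, hj1⟩ := hsj j
        have h2 : 0 ≤ (((j:ℕ) + 1 : ℝ)/m) * (ρ * e) := by positivity
        have h1 : (((j:ℕ) + 1 : ℝ)/m) * (ρ * e) ≤ ρ * e := by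
          have := mul_le_mul_of_nonneg_right hj1 hρe0.le
          linarith
        exact ⟨by linarith [hp.1], by linarith⟩
      · refine ⟨-(ρ * e), by rw [abs_neg]; exact abs_of_pos hρe0, fun j => ?_⟩
        obtain ⟨hj0, hj1⟩ := hsj j
        have h2 : 0 ≤ (((j:ℕ) + 1 : ℝ)/m) * (ρ * e) := by positivity
        have h1 : (((j:ℕ) + 1 : ℝ)/m) * (ρ * e) ≤ ρ * e := by
          have := mul_le_mul_of_nonneg_right hj1 hρe0.le
          linarith
        have he : p + (((j:ℕ) + 1 : ℝ)/m) * (-(ρ * e)) = p - (((j:ℕ) + 1 : ℝ)/m) * (ρ * e) := by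
          ring
        rw [he]
        exact ⟨by linarith, by linarith [hp.2]⟩
    set xj : Fin m → ℝ := fun j => p + (((j:ℕ) + 1 : ℝ)/m) * d with hxjdef
    have hxjsub : ∀ j, xj j - p = (((j:ℕ) + 1 : ℝ)/m) * d := by
      intro j; rw [hxjdef]; ring
    have hxjle : ∀ j, |xj j - p| ≤ ρ * e := by
      intro j
      rw [hxjsub j, abs_mul, hdabs]
      obtain ⟨hj0, hj1⟩ := hsj j
      rw [abs_of_pos hj0]
      have := mul_le_mul_of_nonneg_right hj1 hρe0.le
      linarith
    have hNu : ∀ j, ‖N (ψ (xj j) - P)‖ ≤ 2*(C3 * e^(m+1)) := by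
      intro j
      refine hpt (xj j) (hmem j) ?_
      refine (hxjle j).trans ?_
      calc ρ * e ≤ (1/(2*L)) * e := mul_le_mul_of_nonneg_right hρ2L he0.le
        _ = e/(2*L) := by ring
    set Rf : Fin m → EuclideanSpace ℝ (Fin m) := fun j =>
      ψ (xj j) - ∑ k ∈ Finset.range (m+1), (((k)! : ℝ)⁻¹ * (xj j - p)^k) • v k with hRfdef
    have hRj : ∀ j, ‖Rf j‖ ≤ CT * (ρ*e)^(m+1) := by
      intro j
      refine (hTψ (xj j) (hmem j)).trans ?_
      exact mul_le_mul_of_nonneg_left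
        (pow_le_pow_left₀ (abs_nonneg _) (hxjle j) _) hCTnn
    -- the node values recombine to the derivative directions
    have hTs : ∀ j : Fin m,
        ∑ n' : Fin m, ((((j : ℕ) + 1 : ℝ) / m) ^ ((n' : ℕ) + 1) / (((n' : ℕ) + 1)! : ℝ)) •
            (d^((n' : ℕ)+1) • N (v ((n' : ℕ)+1)))
          = N (ψ (xj j) - P) - N (Rf j) := by
      intro j
      have hid : ψ (xj j) - P - Rf j
          = ∑ k ∈ Finset.range m, ((((k+1))! : ℝ)⁻¹ * (xj j - p)^(k+1)) • v (k+1) := by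
        rw [hRfdef]
        have : ψ (xj j) - P - (ψ (xj j) -
            ∑ k ∈ Finset.range (m+1), (((k)! : ℝ)⁻¹ * (xj j - p)^k) • v k)
            = (∑ k ∈ Finset.range (m+1), (((k)! : ℝ)⁻¹ * (xj j - p)^k) • v k) - P := by abel
        rw [this, Finset.sum_range_succ']
        simp [hv0]
      have hrhs : N (ψ (xj j) - P) - N (Rf j) = N (ψ (xj j) - P - Rf j) :=
        (map_sub N (ψ (xj j) - P) (Rf j)).symm
      rw [hrhs, hid, map_sum]
      have hconv : ∀ k ∈ Finset.range m,
          N (((((k+1))! : ℝ)⁻¹ * (xj j - p)^(k+1)) • v (k+1))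
            = ((((j : ℕ) + 1 : ℝ) / m) ^ (k + 1) / (((k + 1))! : ℝ)) •
              (d^(k+1) • N (v (k+1))) := by
        intro k hk
        rw [map_smul, smul_smul]
        congr 1
        rw [hxjsub j, mul_pow]
        ring
      rw [Finset.sum_congr rfl hconv]
      exact Fin.sum_univ_eq_sum_range (fun k =>
        ((((j : ℕ) + 1 : ℝ) / m) ^ (k + 1) / (((k + 1))! : ℝ)) •
          (d^(k+1) • N (v (k+1)))) m
    have hwn : ∀ n : Fin m, d^((n:ℕ)+1) • N (v ((n:ℕ)+1))
        = ∑ j : Fin m, A n j • (N (ψ (xj j) - P) - N (Rf j)) := by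
      intro n
      have h0 := hA (EuclideanSpace ℝ (Fin m))
        (fun n' => d^((n':ℕ)+1) • N (v ((n':ℕ)+1))) n
      rw [← h0]
      refine Finset.sum_congr rfl fun j _ => ?_
      rw [hTs j]
    -- useful nonnegativity facts
    have hiρnn : (0:ℝ) ≤ iρ := by linarith
    have hρenn : (0:ℝ) ≤ ρ * e := hρe0.le
    have hN0 : (0:ℝ) ≤ ‖N‖ := norm_nonneg N
    have hN1 : (1:ℝ) ≤ 1 + ‖N‖ := by linarith
    have hGnn : (0:ℝ) ≤ 2*(C3*e^(m+1)) + ‖N‖*(CT*(ρ*e)^(m+1)) := by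
      have h1 : (0:ℝ) ≤ C3*e^(m+1) := mul_nonneg hC3nn (pow_nonneg he0.le _)
      have h2 : (0:ℝ) ≤ CT*(ρ*e)^(m+1) := mul_nonneg hCTnn (pow_nonneg hρenn _)
      have h3 : (0:ℝ) ≤ ‖N‖*(CT*(ρ*e)^(m+1)) := mul_nonneg (norm_nonneg _) h2
      linarith
    -- bound on each basis direction
    have hvbound : ∀ n : Fin m, ‖N (v ((n:ℕ)+1))‖ ≤ C5 * e * (1 + ‖N‖) := by
      intro n
      have hq1 : (n:ℕ) + 1 ≤ m := n.2
      have hnorm1 : (ρ*e)^((n:ℕ)+1) * ‖N (v ((n:ℕ)+1))‖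
          ≤ KA * (2*(C3*e^(m+1)) + ‖N‖*(CT*(ρ*e)^(m+1))) := by
        have h0 : (ρ*e)^((n:ℕ)+1) * ‖N (v ((n:ℕ)+1))‖ = ‖d^((n:ℕ)+1) • N (v ((n:ℕ)+1))‖ := by
          rw [norm_smul, Real.norm_eq_abs, abs_pow, hdabs]
        rw [h0, hwn n]
        calc ‖∑ j : Fin m, A n j • (N (ψ (xj j) - P) - N (Rf j))‖
            ≤ ∑ j : Fin m, ‖A n j • (N (ψ (xj j) - P) - N (Rf j))‖ := norm_sum_le _ _
          _ ≤ ∑ j : Fin m, |A n j| * (2*(C3*e^(m+1)) + ‖N‖*(CT*(ρ*e)^(m+1))) := by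
              refine Finset.sum_le_sum fun j _ => ?_
              rw [norm_smul, Real.norm_eq_abs]
              refine mul_le_mul_of_nonneg_left ?_ (abs_nonneg _)
              calc ‖N (ψ (xj j) - P) - N (Rf j)‖
                  ≤ ‖N (ψ (xj j) - P)‖ + ‖N (Rf j)‖ := norm_sub_le _ _
                _ ≤ 2*(C3*e^(m+1)) + ‖N‖*(CT*(ρ*e)^(m+1)) := by
                    refine add_le_add (hNu j) ?_
                    exact (N.le_opNorm _).trans
                      (mul_le_mul_of_nonneg_left (hRj j) (norm_nonneg _))
          _ = (∑ j : Fin m, |A n j|) * (2*(C3*e^(m+1)) + ‖N‖*(CT*(ρ*e)^(m+1))) := by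
              rw [← Finset.sum_mul]
          _ ≤ KA * (2*(C3*e^(m+1)) + ‖N‖*(CT*(ρ*e)^(m+1))) :=
              mul_le_mul_of_nonneg_right (hKArow n) hGnn
      have hpow : KA * (2*(C3*e^(m+1)) + ‖N‖*(CT*(ρ*e)^(m+1)))
          ≤ (ρ*e)^((n:ℕ)+1) * (C5 * e * (1+‖N‖)) := by
        set q : ℕ := (n:ℕ) with hqdef
        have hq1' : q + 1 ≤ m := hq1
        have hmq1 : 1 ≤ m - q := by omega
        have hsplitm : m + 1 = (q + 1) + (m - q) := by omega
        have he_le : e^(m-q) ≤ e := by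
          calc e^(m-q) ≤ e^1 := pow_le_pow_of_le_one he0.le hk2 hmq1
            _ = e := pow_one e
        have hρe_le : (ρ*e)^(m-q) ≤ e := by
          have h1 : (ρ*e)^(m-q) ≤ (ρ*e)^1 := pow_le_pow_of_le_one hρenn hρe1 hmq1
          rw [pow_one] at h1
          linarith
        have hiρpow : (1:ℝ) ≤ iρ^(m-q) := by
          calc (1:ℝ) = 1^(m-q) := (one_pow _).symm
            _ ≤ iρ^(m-q) := pow_le_pow_left₀ zero_le_one hiρ1 _
        have hid1 : (ρ*e)^(q+1) * iρ^(m+1) = e^(q+1) * iρ^(m-q) := by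
          rw [hsplitm, pow_add (iρ) (q+1) (m-q), mul_pow]
          have hone : ρ^(q+1) * iρ^(q+1) = 1 := by rw [← mul_pow, hρiρ, one_pow]
          calc (ρ^(q+1) * e^(q+1)) * (iρ^(q+1) * iρ^(m-q))
              = (ρ^(q+1) * iρ^(q+1)) * (e^(q+1) * iρ^(m-q)) := by ring
            _ = e^(q+1) * iρ^(m-q) := by rw [hone, one_mul]
        have hterm1 : e^(m+1) ≤ (ρ*e)^(q+1) * iρ^(m+1) * e := by
          have h2 : e^(q+1) ≤ e^(q+1) * iρ^(m-q) := by
            calc e^(q+1) = e^(q+1) * 1 := (mul_one _).symm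
              _ ≤ e^(q+1) * iρ^(m-q) :=
                  mul_le_mul_of_nonneg_left hiρpow (pow_nonneg he0.le _)
          calc e^(m+1) = e^(q+1) * e^(m-q) := by rw [hsplitm, pow_add]
            _ ≤ e^(q+1) * e :=
                mul_le_mul_of_nonneg_left he_le (pow_nonneg he0.le _)
            _ ≤ (e^(q+1) * iρ^(m-q)) * e := mul_le_mul_of_nonneg_right h2 he0.le
            _ = (ρ*e)^(q+1) * iρ^(m+1) * e := by rw [hid1]
        have hterm2 : (ρ*e)^(m+1) ≤ (ρ*e)^(q+1) * e := by
          calc (ρ*e)^(m+1) = (ρ*e)^(q+1) * (ρ*e)^(m-q) := by rw [hsplitm, pow_add]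
            _ ≤ (ρ*e)^(q+1) * e :=
                mul_le_mul_of_nonneg_left hρe_le (pow_nonneg hρenn _)
        have hpownn : (0:ℝ) ≤ (ρ*e)^(q+1) := pow_nonneg hρenn _
        have hc1nn : (0:ℝ) ≤ KA*2*C3 := mul_nonneg (mul_nonneg hKAnn (by norm_num)) hC3nn
        have hc2nn : (0:ℝ) ≤ 2*C3*iρ^(m+1) :=
          mul_nonneg (mul_nonneg (by norm_num) hC3nn) (pow_nonneg hiρnn _)
        have hA1 : KA * (2*(C3*e^(m+1)))
            ≤ (ρ*e)^(q+1) * (KA*(2*C3*iρ^(m+1)) * e * (1+‖N‖)) := by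
          calc KA * (2*(C3*e^(m+1))) = (KA*2*C3) * e^(m+1) := by ring
            _ ≤ (KA*2*C3) * ((ρ*e)^(q+1) * iρ^(m+1) * e) :=
                mul_le_mul_of_nonneg_left hterm1 hc1nn
            _ = ((ρ*e)^(q+1) * (KA*(2*C3*iρ^(m+1)) * e)) * 1 := by ring
            _ ≤ ((ρ*e)^(q+1) * (KA*(2*C3*iρ^(m+1)) * e)) * (1+‖N‖) := by
                refine mul_le_mul_of_nonneg_left hN1 ?_
                exact mul_nonneg hpownn
                  (mul_nonneg (mul_nonneg hKAnn hc2nn) he0.le)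
            _ = (ρ*e)^(q+1) * (KA*(2*C3*iρ^(m+1)) * e * (1+‖N‖)) := by ring
        have hA2 : KA * (‖N‖*(CT*(ρ*e)^(m+1)))
            ≤ (ρ*e)^(q+1) * (KA*CT * e * (1+‖N‖)) := by
          have hc3nn : (0:ℝ) ≤ KA*CT*‖N‖ := mul_nonneg (mul_nonneg hKAnn hCTnn) hN0
          calc KA * (‖N‖*(CT*(ρ*e)^(m+1))) = (KA*CT*‖N‖) * (ρ*e)^(m+1) := by ring
            _ ≤ (KA*CT*‖N‖) * ((ρ*e)^(q+1) * e) :=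
                mul_le_mul_of_nonneg_left hterm2 hc3nn
            _ = ((ρ*e)^(q+1) * (KA*CT*e)) * ‖N‖ := by ring
            _ ≤ ((ρ*e)^(q+1) * (KA*CT*e)) * (1+‖N‖) := by
                refine mul_le_mul_of_nonneg_left (by linarith) ?_
                exact mul_nonneg hpownn (mul_nonneg (mul_nonneg hKAnn hCTnn) he0.le)
            _ = (ρ*e)^(q+1) * (KA*CT * e * (1+‖N‖)) := by ring
        calc KA * (2*(C3*e^(m+1)) + ‖N‖*(CT*(ρ*e)^(m+1)))
            = KA * (2*(C3*e^(m+1))) + KA * (‖N‖*(CT*(ρ*e)^(m+1))) := by ring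
          _ ≤ (ρ*e)^(q+1) * (KA*(2*C3*iρ^(m+1)) * e * (1+‖N‖))
              + (ρ*e)^(q+1) * (KA*CT * e * (1+‖N‖)) := add_le_add hA1 hA2
          _ = (ρ*e)^(q+1) * ((KA*(2*C3*iρ^(m+1)) + KA*CT) * e * (1+‖N‖)) := by ring
          _ = (ρ*e)^(q+1) * (C5 * e * (1+‖N‖)) := by rw [hC5def]
      have hppos : 0 < (ρ*e)^((n:ℕ)+1) := pow_pos hρe0 _
      exact le_of_mul_le_mul_left (hnorm1.trans hpow) hppos
    -- basis estimate and absorption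
    have hB : ‖N‖ ≤ K * (C5 * e * (1 + ‖N‖)) := by
      refine hKle N (C5 * e * (1 + ‖N‖)) ?_ ?_
      · exact mul_nonneg (mul_nonneg hC5nn he0.le) (by linarith)
      · intro n
        rw [hbas n]
        exact hvbound n
    have h1 : ‖N‖ ≤ C6 * e + (C6 * e) * ‖N‖ := by
      calc ‖N‖ ≤ K * (C5 * e * (1 + ‖N‖)) := hB
        _ = C6 * e + (C6 * e) * ‖N‖ := by rw [hC6def]; ring
    have h2 : (C6 * e) * ‖N‖ ≤ (1/2) * ‖N‖ :=
      mul_le_mul_of_nonneg_right hk4 (norm_nonneg N)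
    have h3 : (0:ℝ) ≤ ‖N‖ := norm_nonneg N
    linarith
  -- final assembly
  have hev : ∀ᶠ k in atTop, ‖Mk k - M‖ ≤ (2*C6) * ε k := by
    have h1 : ∀ᶠ k in atTop, ε k < ε0/2 := hεlim.eventually (eventually_lt_nhds (by positivity))
    have h2 : ∀ᶠ k in atTop, ε k < 1 := hεlim.eventually (eventually_lt_nhds one_pos)
    have h3 : ∀ᶠ k in atTop, ε k < r := hεlim.eventually (eventually_lt_nhds hrpos)
    have h4 : ∀ᶠ k in atTop, C6 * ε k ≤ 1/2 := by
      have h := hεlim.const_mul C6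
      rw [mul_zero] at h
      exact h.eventually (eventually_le_nhds (by norm_num))
    filter_upwards [h1, h2, h3, h4] with k hk1 hk2 hk3 hk4
    exact hmain k hk1.le hk2.le hk3 hk4
  constructor
  · rw [tendsto_iff_norm_sub_tendsto_zero]
    have hC6e : Tendsto (fun k => (2*C6) * ε k) atTop (𝓝 0) := by
      have h := hεlim.const_mul (2*C6)
      rwa [mul_zero] at h
    exact squeeze_zero' (Eventually.of_forall fun k => norm_nonneg _) hev hC6e
  · exact ⟨2*C6, hev⟩
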